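/- The Fourier projection P_k commutes appropriately with Bessel operators: if ψ̂ : ℝ² → ℂ is C¹ and P_k[ψ̂](r) := (1/2π) ∫₀^{2π} ψ̂(r cos θ, r sin θ) e^{−ikθ} dθ, then D_k(P_k[ψ̂])(r) = P_{k−1}[√2 ∂_ζ ψ̂](r) and D_{−k}(P_k[ψ̂])(r) = P_{k+1}[√2 ∂_{ζ̄} ψ̂](r) for r > 0. -/

import Mathlib

/-- The Bessel operator `D_κ f (r) = f'(r) + (κ/r) f(r)`. -/
noncomputable def besselD (κ : ℝ) (f : ℝ → ℂ) : ℝ → ℂ :=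
  fun r => deriv f r + ((κ / r : ℝ) : ℂ) * f r

/-- The Fourier projection `P_k[ψ](r) = (1/2π) ∫₀^{2π} ψ(r cos θ, r sin θ) e^{−ikθ} dθ`. -/
noncomputable def fourierProj (k : ℤ) (ψ : ℝ × ℝ → ℂ) (r : ℝ) : ℂ :=
  ((1 / (2 * Real.pi) : ℝ) : ℂ) *
    ∫ θ in (0 : ℝ)..(2 * Real.pi),
      ψ (r * Real.cos θ, r * Real.sin θ) * Complex.exp (-(Complex.I * k * θ))

open Real MeasureTheory intervalIntegral Metric

private lemma radial_hasDerivAt {ψ : ℝ × ℝ → ℂ} (hψ : Differentiable ℝ ψ) (θ x : ℝ) :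
    HasDerivAt (fun s : ℝ => ψ (s * Real.cos θ, s * Real.sin θ))
      (fderiv ℝ ψ (x * Real.cos θ, x * Real.sin θ) (Real.cos θ, Real.sin θ)) x := by
  have h1 : HasDerivAt (fun s : ℝ => (s * Real.cos θ, s * Real.sin θ))
      (Real.cos θ, Real.sin θ) x := by
    simpa using ((hasDerivAt_id x).mul_const (Real.cos θ)).prodMk
      ((hasDerivAt_id x).mul_const (Real.sin θ))
  exact (hψ _).hasFDerivAt.comp_hasDerivAt x h1

private lemma angular_hasDerivAt {ψ : ℝ × ℝ → ℂ} (hψ : Differentiable ℝ ψ) (r θ : ℝ) :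
    HasDerivAt (fun t : ℝ => ψ (r * Real.cos t, r * Real.sin t))
      (fderiv ℝ ψ (r * Real.cos θ, r * Real.sin θ) (-(r * Real.sin θ), r * Real.cos θ)) θ := by
  have h1 : HasDerivAt (fun t : ℝ => (r * Real.cos t, r * Real.sin t))
      (-(r * Real.sin θ), r * Real.cos θ) θ := by
    have := ((Real.hasDerivAt_cos θ).const_mul r).prodMk ((Real.hasDerivAt_sin θ).const_mul r)
    simpa [mul_neg] using this
  exact (hψ _).hasFDerivAt.comp_hasDerivAt θ h1

private lemma expE_hasDerivAt (m : ℤ) (θ : ℝ) :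
    HasDerivAt (fun t : ℝ => Complex.exp (-(Complex.I * m * t)))
      (-(Complex.I * m) * Complex.exp (-(Complex.I * m * θ))) θ := by
  have h1 : HasDerivAt (fun t : ℝ => -(Complex.I * m * (t : ℂ))) (-(Complex.I * m)) θ := by
    simpa [Pi.neg_def] using ((Complex.ofRealCLM.hasDerivAt (x := θ)).const_mul (Complex.I * m)).neg
  simpa [mul_comm] using h1.cexp

private lemma expE_norm (m : ℤ) (θ : ℝ) : ‖Complex.exp (-(Complex.I * m * θ))‖ = 1 := by
  rw [Complex.norm_exp]
  simp

private lemma deriv_under_integral {ψ : ℝ × ℝ → ℂ} (hψ : ContDiff ℝ 1 ψ) (k : ℤ) (r : ℝ) :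
    HasDerivAt (fun x : ℝ => ∫ θ in (0 : ℝ)..(2 * Real.pi),
        ψ (x * Real.cos θ, x * Real.sin θ) * Complex.exp (-(Complex.I * k * θ)))
      (∫ θ in (0 : ℝ)..(2 * Real.pi),
        (fderiv ℝ ψ (r * Real.cos θ, r * Real.sin θ)) (Real.cos θ, Real.sin θ)
          * Complex.exp (-(Complex.I * k * θ))) r := by
  have hdiff := hψ.differentiable one_ne_zero
  have hcont := hψ.continuous
  have hfc : Continuous (fderiv ℝ ψ) := hψ.continuous_fderiv one_ne_zero
  obtain ⟨M, hM⟩ := (isCompact_closedBall (0 : ℝ × ℝ) (|r| + 1)).exists_bound_of_continuousOn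
    hfc.continuousOn
  have hcos : ∀ θ : ℝ, ‖(Real.cos θ, Real.sin θ)‖ ≤ 1 := by
    intro θ
    rw [Prod.norm_def]
    exact max_le (by simpa [Real.norm_eq_abs] using Real.abs_cos_le_one θ)
      (by simpa [Real.norm_eq_abs] using Real.abs_sin_le_one θ)
  have hmem : ∀ x ∈ ball r 1, ∀ θ : ℝ,
      (x * Real.cos θ, x * Real.sin θ) ∈ closedBall (0 : ℝ × ℝ) (|r| + 1) := by
    intro x hx θ
    rw [mem_closedBall, dist_zero_right, Prod.norm_def]
    have hx' : |x| ≤ |r| + 1 := by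
      have := mem_ball.mp hx
      rw [Real.dist_eq] at this
      calc |x| = |r + (x - r)| := by ring_nf
        _ ≤ |r| + |x - r| := abs_add_le _ _
        _ ≤ |r| + 1 := by linarith
    refine max_le ?_ ?_
    · calc ‖x * Real.cos θ‖ = |x| * |Real.cos θ| := abs_mul _ _
        _ ≤ |x| * 1 := by gcongr; exact Real.abs_cos_le_one θ
        _ ≤ |r| + 1 := by simpa using hx'
    · calc ‖x * Real.sin θ‖ = |x| * |Real.sin θ| := abs_mul _ _
        _ ≤ |x| * 1 := by gcongr; exact Real.abs_sin_le_one θ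
        _ ≤ |r| + 1 := by simpa using hx'
  have hFcont : ∀ x : ℝ, Continuous (fun θ : ℝ =>
      ψ (x * Real.cos θ, x * Real.sin θ) * Complex.exp (-(Complex.I * k * θ))) := by
    intro x
    exact (hcont.comp (by fun_prop)).mul (by fun_prop)
  have hF'cont : Continuous (fun θ : ℝ =>
      (fderiv ℝ ψ (r * Real.cos θ, r * Real.sin θ)) (Real.cos θ, Real.sin θ)
        * Complex.exp (-(Complex.I * k * θ))) := by
    exact ((hfc.comp (by fun_prop)).clm_apply (by fun_prop)).mul (by fun_prop)
  have key := intervalIntegral.hasDerivAt_integral_of_dominated_loc_of_deriv_le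
    (μ := volume) (a := (0:ℝ)) (b := 2 * Real.pi)
    (F := fun x θ => ψ (x * Real.cos θ, x * Real.sin θ) * Complex.exp (-(Complex.I * k * θ)))
    (F' := fun x θ => (fderiv ℝ ψ (x * Real.cos θ, x * Real.sin θ)) (Real.cos θ, Real.sin θ)
        * Complex.exp (-(Complex.I * k * θ)))
    (x₀ := r) (bound := fun _ => M) (ball_mem_nhds r one_pos)
    (Filter.Eventually.of_forall fun x => (hFcont x).aestronglyMeasurable)
    ((hFcont r).intervalIntegrable _ _)
    hF'cont.aestronglyMeasurable
    (Filter.Eventually.of_forall ?_)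
    (intervalIntegrable_const)
    (Filter.Eventually.of_forall ?_)
  · exact key.2
  · intro θ _ x hx
    rw [norm_mul, expE_norm, mul_one]
    calc ‖(fderiv ℝ ψ (x * Real.cos θ, x * Real.sin θ)) (Real.cos θ, Real.sin θ)‖
        ≤ ‖fderiv ℝ ψ (x * Real.cos θ, x * Real.sin θ)‖ * ‖(Real.cos θ, Real.sin θ)‖ :=
          ContinuousLinearMap.le_opNorm _ _
      _ ≤ M * 1 := by
          apply mul_le_mul (hM _ (hmem x hx θ)) (hcos θ) (norm_nonneg _)
          exact le_trans (norm_nonneg _) (hM _ (hmem x hx θ))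
      _ = M := mul_one M
  · intro θ _ x _
    exact (radial_hasDerivAt hdiff θ x).mul_const _

private lemma angular_ibp {ψ : ℝ × ℝ → ℂ} (hψ : ContDiff ℝ 1 ψ) (k : ℤ) (r : ℝ) :
    (∫ θ in (0 : ℝ)..(2 * Real.pi),
        (fderiv ℝ ψ (r * Real.cos θ, r * Real.sin θ)) (-(r * Real.sin θ), r * Real.cos θ)
          * Complex.exp (-(Complex.I * k * θ)))
      = Complex.I * k * ∫ θ in (0 : ℝ)..(2 * Real.pi),
          ψ (r * Real.cos θ, r * Real.sin θ) * Complex.exp (-(Complex.I * k * θ)) := by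
  have hdiff := hψ.differentiable one_ne_zero
  have hcont := hψ.continuous
  have hfc : Continuous (fderiv ℝ ψ) := hψ.continuous_fderiv one_ne_zero
  have hucont : Continuous (fun θ : ℝ => ψ (r * Real.cos θ, r * Real.sin θ)) :=
    hcont.comp (by fun_prop)
  have hu'cont : Continuous (fun θ : ℝ =>
      (fderiv ℝ ψ (r * Real.cos θ, r * Real.sin θ)) (-(r * Real.sin θ), r * Real.cos θ)) :=
    (hfc.comp (by fun_prop)).clm_apply (by fun_prop)
  have hEcont : Continuous (fun θ : ℝ => Complex.exp (-(Complex.I * k * θ))) := by fun_prop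
  have ibp := intervalIntegral.integral_mul_deriv_eq_deriv_mul
    (a := (0:ℝ)) (b := 2 * Real.pi)
    (u := fun θ => ψ (r * Real.cos θ, r * Real.sin θ))
    (u' := fun θ => (fderiv ℝ ψ (r * Real.cos θ, r * Real.sin θ))
        (-(r * Real.sin θ), r * Real.cos θ))
    (v := fun θ => Complex.exp (-(Complex.I * k * θ)))
    (v' := fun θ => -(Complex.I * k) * Complex.exp (-(Complex.I * k * θ)))
    (fun θ _ => angular_hasDerivAt hdiff r θ)
    (fun θ _ => expE_hasDerivAt k θ)
    (hu'cont.intervalIntegrable _ _)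
    ((continuous_const.mul hEcont).intervalIntegrable _ _)
  have hE2π : Complex.exp (-(Complex.I * k * (2 * Real.pi : ℝ))) = 1 := by
    have := Complex.exp_int_mul_two_pi_mul_I (-k)
    rw [← this]
    push_cast
    ring_nf
  have hE0 : Complex.exp (-(Complex.I * k * ((0 : ℝ) : ℂ))) = 1 := by
    simp
  have hbd : ψ (r * Real.cos (2 * Real.pi), r * Real.sin (2 * Real.pi))
      = ψ (r * Real.cos 0, r * Real.sin 0) := by
    simp [Real.cos_two_pi, Real.sin_two_pi]
  simp only [hE2π, hE0, hbd, mul_one, sub_self, zero_sub] at ibp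
  have h3 : (∫ θ in (0 : ℝ)..(2 * Real.pi),
      (fderiv ℝ ψ (r * Real.cos θ, r * Real.sin θ)) (-(r * Real.sin θ), r * Real.cos θ)
        * Complex.exp (-(Complex.I * k * θ)))
      = -∫ θ in (0 : ℝ)..(2 * Real.pi), ψ (r * Real.cos θ, r * Real.sin θ)
          * (-(Complex.I * k) * Complex.exp (-(Complex.I * k * θ))) := by
    rw [ibp, neg_neg]
  rw [h3, ← intervalIntegral.integral_neg, ← intervalIntegral.integral_const_mul]
  congr 1
  funext θ
  ring

private lemma clm_apply_pair (L : ℝ × ℝ →L[ℝ] ℂ) (a b : ℝ) :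
    L (a, b) = (a : ℂ) * L (1, 0) + (b : ℂ) * L (0, 1) := by
  have h : ((a, b) : ℝ × ℝ) = a • ((1 : ℝ), (0 : ℝ)) + b • ((0 : ℝ), (1 : ℝ)) := by
    simp [Prod.ext_iff]
  rw [h, L.map_add, L.map_smul, L.map_smul, Complex.real_smul, Complex.real_smul]

private lemma ptwise_minus (k : ℤ) (r θ : ℝ) (hr : r ≠ 0) (L : ℝ × ℝ →L[ℝ] ℂ) :
    (L (1, 0) - Complex.I * L (0, 1)) * Complex.exp (-(Complex.I * ((k - 1 : ℤ) : ℂ) * θ)) =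
      L (Real.cos θ, Real.sin θ) * Complex.exp (-(Complex.I * k * θ))
      - (Complex.I / r) * (L (-(r * Real.sin θ), r * Real.cos θ)
          * Complex.exp (-(Complex.I * k * θ))) := by
  have hrC : (r : ℂ) ≠ 0 := Complex.ofReal_ne_zero.mpr hr
  have hE : Complex.exp (-(Complex.I * ((k - 1 : ℤ) : ℂ) * θ))
      = ((Real.cos θ : ℂ) + (Real.sin θ : ℂ) * Complex.I)
          * Complex.exp (-(Complex.I * k * θ)) := by
    rw [Complex.ofReal_cos, Complex.ofReal_sin, ← Complex.exp_mul_I, ← Complex.exp_add]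
    congr 1
    push_cast
    ring
  rw [hE, clm_apply_pair L (Real.cos θ) (Real.sin θ),
    clm_apply_pair L (-(r * Real.sin θ)) (r * Real.cos θ)]
  push_cast [-Complex.ofReal_sin, -Complex.ofReal_cos]
  field_simp
  linear_combination (-((Real.sin θ : ℝ) : ℂ) * L (0, 1)) * Complex.I_mul_I

private lemma ptwise_plus (k : ℤ) (r θ : ℝ) (hr : r ≠ 0) (L : ℝ × ℝ →L[ℝ] ℂ) :
    (L (1, 0) + Complex.I * L (0, 1)) * Complex.exp (-(Complex.I * ((k + 1 : ℤ) : ℂ) * θ)) =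
      L (Real.cos θ, Real.sin θ) * Complex.exp (-(Complex.I * k * θ))
      + (Complex.I / r) * (L (-(r * Real.sin θ), r * Real.cos θ)
          * Complex.exp (-(Complex.I * k * θ))) := by
  have hrC : (r : ℂ) ≠ 0 := Complex.ofReal_ne_zero.mpr hr
  have hE : Complex.exp (-(Complex.I * ((k + 1 : ℤ) : ℂ) * θ))
      = ((Real.cos (-θ) : ℂ) + (Real.sin (-θ) : ℂ) * Complex.I)
          * Complex.exp (-(Complex.I * k * θ)) := by
    rw [Complex.ofReal_cos, Complex.ofReal_sin, ← Complex.exp_mul_I, ← Complex.exp_add]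
    congr 1
    push_cast
    ring
  rw [hE, clm_apply_pair L (Real.cos θ) (Real.sin θ),
    clm_apply_pair L (-(r * Real.sin θ)) (r * Real.cos θ), Real.cos_neg, Real.sin_neg]
  push_cast [-Complex.ofReal_sin, -Complex.ofReal_cos]
  field_simp
  linear_combination (-((Real.sin θ : ℝ) : ℂ) * L (0, 1)) * Complex.I_mul_I

/-- `D_k P_k[ψ] = P_{k−1}[√2 ∂_ζ ψ]` and `D_{−k} P_k[ψ] = P_{k+1}[√2 ∂_{ζ̄} ψ]`,
where `√2 ∂_ζ ψ = ∂_x ψ − i ∂_y ψ` and `√2 ∂_{ζ̄} ψ = ∂_x ψ + i ∂_y ψ`. -/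
theorem fourierProj_besselD (k : ℤ) (ψ : ℝ × ℝ → ℂ) (hψ : ContDiff ℝ 1 ψ) :
    ∀ r > (0 : ℝ),
      besselD (k : ℝ) (fourierProj k ψ) r
          = fourierProj (k - 1)
              (fun p => fderiv ℝ ψ p (1, 0) - Complex.I * fderiv ℝ ψ p (0, 1)) r
      ∧ besselD (-(k : ℝ)) (fourierProj k ψ) r
          = fourierProj (k + 1)
              (fun p => fderiv ℝ ψ p (1, 0) + Complex.I * fderiv ℝ ψ p (0, 1)) r := by
  intro r hr
  have hrne : r ≠ 0 := ne_of_gt hr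
  have hrC : (r : ℂ) ≠ 0 := Complex.ofReal_ne_zero.mpr hrne
  have hcont := hψ.continuous
  have hfc : Continuous (fderiv ℝ ψ) := hψ.continuous_fderiv one_ne_zero
  set c : ℂ := ((1 / (2 * Real.pi) : ℝ) : ℂ) with hc
  set A : ℂ := ∫ θ in (0 : ℝ)..(2 * Real.pi),
      ψ (r * Real.cos θ, r * Real.sin θ) * Complex.exp (-(Complex.I * k * θ)) with hA
  set B : ℂ := ∫ θ in (0 : ℝ)..(2 * Real.pi),
      (fderiv ℝ ψ (r * Real.cos θ, r * Real.sin θ)) (Real.cos θ, Real.sin θ)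
        * Complex.exp (-(Complex.I * k * θ)) with hB
  set C : ℂ := ∫ θ in (0 : ℝ)..(2 * Real.pi),
      (fderiv ℝ ψ (r * Real.cos θ, r * Real.sin θ)) (-(r * Real.sin θ), r * Real.cos θ)
        * Complex.exp (-(Complex.I * k * θ)) with hCdef
  have hD : HasDerivAt (fourierProj k ψ) (c * B) r :=
    HasDerivAt.const_mul c (deriv_under_integral hψ k r)
  have hderiv : deriv (fourierProj k ψ) r = c * B := hD.deriv
  have hC : C = Complex.I * k * A := angular_ibp hψ k r
  -- continuity of integrand pieces
  have hBcont : Continuous (fun θ : ℝ =>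
      (fderiv ℝ ψ (r * Real.cos θ, r * Real.sin θ)) (Real.cos θ, Real.sin θ)
        * Complex.exp (-(Complex.I * k * θ))) :=
    ((hfc.comp (by fun_prop)).clm_apply (by fun_prop)).mul (by fun_prop)
  have hCcont : Continuous (fun θ : ℝ =>
      (fderiv ℝ ψ (r * Real.cos θ, r * Real.sin θ)) (-(r * Real.sin θ), r * Real.cos θ)
        * Complex.exp (-(Complex.I * k * θ))) :=
    ((hfc.comp (by fun_prop)).clm_apply (by fun_prop)).mul (by fun_prop)
  have hPk : fourierProj k ψ r = c * A := rfl
  constructor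
  · have hsplit : (∫ θ in (0 : ℝ)..(2 * Real.pi),
        (fderiv ℝ ψ (r * Real.cos θ, r * Real.sin θ) (1, 0)
          - Complex.I * fderiv ℝ ψ (r * Real.cos θ, r * Real.sin θ) (0, 1))
          * Complex.exp (-(Complex.I * ((k - 1 : ℤ) : ℂ) * θ)))
        = B - (Complex.I / r) * C := by
      have hcong : ∀ θ : ℝ,
          (fderiv ℝ ψ (r * Real.cos θ, r * Real.sin θ) (1, 0)
            - Complex.I * fderiv ℝ ψ (r * Real.cos θ, r * Real.sin θ) (0, 1))
            * Complex.exp (-(Complex.I * ((k - 1 : ℤ) : ℂ) * θ))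
          = (fderiv ℝ ψ (r * Real.cos θ, r * Real.sin θ)) (Real.cos θ, Real.sin θ)
              * Complex.exp (-(Complex.I * k * θ))
            - (Complex.I / r) * ((fderiv ℝ ψ (r * Real.cos θ, r * Real.sin θ))
                (-(r * Real.sin θ), r * Real.cos θ) * Complex.exp (-(Complex.I * k * θ))) :=
        fun θ => ptwise_minus k r θ hrne _
      rw [intervalIntegral.integral_congr (g := fun θ =>
          (fderiv ℝ ψ (r * Real.cos θ, r * Real.sin θ)) (Real.cos θ, Real.sin θ)
              * Complex.exp (-(Complex.I * k * θ))
            - (Complex.I / r) * ((fderiv ℝ ψ (r * Real.cos θ, r * Real.sin θ))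
                (-(r * Real.sin θ), r * Real.cos θ) * Complex.exp (-(Complex.I * k * θ))))
          (fun θ _ => hcong θ)]
      rw [intervalIntegral.integral_sub (hBcont.intervalIntegrable _ _)
        ((hCcont.intervalIntegrable _ _).const_mul _),
        intervalIntegral.integral_const_mul]
    show deriv (fourierProj k ψ) r + (((k : ℝ) / r : ℝ) : ℂ) * fourierProj k ψ r = _
    rw [hderiv, hPk]
    show _ = c * ∫ θ in (0 : ℝ)..(2 * Real.pi),
        (fderiv ℝ ψ (r * Real.cos θ, r * Real.sin θ) (1, 0)
          - Complex.I * fderiv ℝ ψ (r * Real.cos θ, r * Real.sin θ) (0, 1))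
          * Complex.exp (-(Complex.I * ((k - 1 : ℤ) : ℂ) * θ))
    rw [hsplit, hC]
    push_cast
    linear_combination (c * A * (k : ℂ) / (r : ℂ)) * Complex.I_mul_I
  · have hsplit : (∫ θ in (0 : ℝ)..(2 * Real.pi),
        (fderiv ℝ ψ (r * Real.cos θ, r * Real.sin θ) (1, 0)
          + Complex.I * fderiv ℝ ψ (r * Real.cos θ, r * Real.sin θ) (0, 1))
          * Complex.exp (-(Complex.I * ((k + 1 : ℤ) : ℂ) * θ)))
        = B + (Complex.I / r) * C := by
      have hcong : ∀ θ : ℝ,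
          (fderiv ℝ ψ (r * Real.cos θ, r * Real.sin θ) (1, 0)
            + Complex.I * fderiv ℝ ψ (r * Real.cos θ, r * Real.sin θ) (0, 1))
            * Complex.exp (-(Complex.I * ((k + 1 : ℤ) : ℂ) * θ))
          = (fderiv ℝ ψ (r * Real.cos θ, r * Real.sin θ)) (Real.cos θ, Real.sin θ)
              * Complex.exp (-(Complex.I * k * θ))
            + (Complex.I / r) * ((fderiv ℝ ψ (r * Real.cos θ, r * Real.sin θ))
                (-(r * Real.sin θ), r * Real.cos θ) * Complex.exp (-(Complex.I * k * θ))) :=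
        fun θ => ptwise_plus k r θ hrne _
      rw [intervalIntegral.integral_congr (g := fun θ =>
          (fderiv ℝ ψ (r * Real.cos θ, r * Real.sin θ)) (Real.cos θ, Real.sin θ)
              * Complex.exp (-(Complex.I * k * θ))
            + (Complex.I / r) * ((fderiv ℝ ψ (r * Real.cos θ, r * Real.sin θ))
                (-(r * Real.sin θ), r * Real.cos θ) * Complex.exp (-(Complex.I * k * θ))))
          (fun θ _ => hcong θ)]
      rw [intervalIntegral.integral_add (hBcont.intervalIntegrable _ _)
        ((hCcont.intervalIntegrable _ _).const_mul _),
        intervalIntegral.integral_const_mul]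
    show deriv (fourierProj k ψ) r + ((-(k : ℝ) / r : ℝ) : ℂ) * fourierProj k ψ r = _
    rw [hderiv, hPk]
    show _ = c * ∫ θ in (0 : ℝ)..(2 * Real.pi),
        (fderiv ℝ ψ (r * Real.cos θ, r * Real.sin θ) (1, 0)
          + Complex.I * fderiv ℝ ψ (r * Real.cos θ, r * Real.sin θ) (0, 1))
          * Complex.exp (-(Complex.I * ((k + 1 : ℤ) : ℂ) * θ))
    rw [hsplit, hC]
    push_cast
    linear_combination (-(c * A * (k : ℂ) / (r : ℂ))) * Complex.I_mul_I
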